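/- Let D ⊆ M and let f : M → [0,+∞] be r.u.u.s.c. in D. Assume t·cl(D) ⊆ D for all t ∈ [0,1) and f is lower semicontinuous in D (for every ξ ∈ D and every sequence (ξ_n) ⊂ D with ξ_n → ξ, f(ξ) ≤ liminf_n f(ξ_n)). Define f̂ : M → [0,+∞] by f̂(ξ) = f(ξ) if ξ ∈ D, f̂(ξ) = lim_{t→1⁻} f(tξ) if ξ ∈ cl(D) \ D, and f̂(ξ) = +∞ otherwise. Then f̂ is radially continuous in cl(D): for every ξ ∈ cl(D), lim_{t→1⁻} f̂(tξ) = f̂(ξ). -/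

import Mathlib

open Filter
open scoped Pointwise ENNReal Topology

/-- `f` is radially uniformly upper semicontinuous (r.u.u.s.c.) in `A`. -/
def RUUSC {E : Type*} [NormedAddCommGroup E] [NormedSpace ℝ E]
    (f : E → ℝ≥0∞) (A : Set E) : Prop :=
  ∀ ε : ℝ, 0 < ε → ∃ η : ℝ, 0 < η ∧
    ∀ ξ ∈ A, ∀ t ∈ Set.Ico (0 : ℝ) 1, 1 - t < η → f (t • ξ) ≤ f ξ + ENNReal.ofReal ε

-- The extension `f̂` of `f`, defined via the radial limit on `cl D \ D`.
open Classical in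
noncomputable def extRadial {E : Type*} [NormedAddCommGroup E] [NormedSpace ℝ E]
    (f : E → ℝ≥0∞) (D : Set E) (ξ : E) : ℝ≥0∞ :=
  if ξ ∈ D then f ξ
  else if ξ ∈ closure D then limsup (fun t : ℝ => f (t • ξ)) (𝓝[<] (1 : ℝ))
  else ⊤

section Aux

variable {E : Type*} [NormedAddCommGroup E] [NormedSpace ℝ E]

lemma aux_Ico_mem : ∀ᶠ t : ℝ in 𝓝[<] (1 : ℝ), t ∈ Set.Ico (0 : ℝ) 1 := by
  filter_upwards [Ioo_mem_nhdsLT_of_mem (a := (0:ℝ)) (c := (1:ℝ))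
    (by simp : (1:ℝ) ∈ Set.Ioc (0:ℝ) 1)] with t ht
  exact ⟨ht.1.le, ht.2⟩

lemma aux_eta (η : ℝ) (hη : 0 < η) : ∀ᶠ t : ℝ in 𝓝[<] (1 : ℝ), 1 - t < η := by
  have h1 : Tendsto (fun t : ℝ => 1 - t) (𝓝[<] (1 : ℝ)) (𝓝 0) := by
    have : Tendsto (fun t : ℝ => t) (𝓝[<] (1 : ℝ)) (𝓝 1) :=
      tendsto_id.mono_left nhdsWithin_le_nhds
    have h2 : Tendsto (fun _ : ℝ => (1:ℝ)) (𝓝[<] (1 : ℝ)) (𝓝 1) := tendsto_const_nhds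
    simpa using h2.sub this
  exact h1.eventually_lt_const hη

/-- Key lemma: the radial limit exists: limsup ≤ liminf. -/
lemma aux_key {D : Set E} {f : E → ℝ≥0∞} (hf : RUUSC f D)
    (hD : ∀ t ∈ Set.Ico (0 : ℝ) 1, t • closure D ⊆ D)
    (hlsc : ∀ ξ ∈ D, ∀ u : ℕ → E, (∀ n, u n ∈ D) → Tendsto u atTop (𝓝 ξ) →
      f ξ ≤ liminf (fun n => f (u n)) atTop)
    {ξ : E} (hξ : ξ ∈ closure D) :
    limsup (fun t : ℝ => f (t • ξ)) (𝓝[<] (1 : ℝ)) ≤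
      liminf (fun t : ℝ => f (t • ξ)) (𝓝[<] (1 : ℝ)) := by
  set l := liminf (fun t : ℝ => f (t • ξ)) (𝓝[<] (1 : ℝ)) with hl
  have hmem : ∀ t ∈ Set.Ico (0 : ℝ) 1, t • ξ ∈ D := fun t ht =>
    hD t ht (Set.smul_mem_smul_set hξ)
  refine le_of_forall_gt_imp_ge_of_dense fun c hc => ?_
  rcases eq_top_or_lt_top c with rfl | hctop
  · exact le_top
  -- extract a sequence of good points
  have hfreq : ∃ᶠ t : ℝ in 𝓝[<] (1 : ℝ), f (t • ξ) < c ∧ t ∈ Set.Ico (0 : ℝ) 1 :=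
    (frequently_lt_of_liminf_lt (by isBoundedDefault) hc).and_eventually aux_Ico_mem
  obtain ⟨s, hs, hsp⟩ := Filter.exists_seq_forall_of_frequently hfreq
  have hs1 : Tendsto s atTop (𝓝 (1 : ℝ)) := hs.mono_right nhdsWithin_le_nhds
  refine ENNReal.le_of_forall_pos_le_add fun ε hε _ => ?_
  obtain ⟨η, hη, hη'⟩ := hf ε hε
  have hev : ∀ᶠ t : ℝ in 𝓝[<] (1 : ℝ), f (t • ξ) ≤ c + ε := by
    filter_upwards [aux_Ico_mem, aux_eta η hη] with t ht hte
    have hu : ∀ n, (t * s n) • ξ ∈ D := fun n =>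
      hmem _ ⟨mul_nonneg ht.1 (hsp n).2.1,
        lt_of_le_of_lt (mul_le_of_le_one_right ht.1 (hsp n).2.2.le) ht.2⟩
    have htend : Tendsto (fun n => (t * s n) • ξ) atTop (𝓝 (t • ξ)) := by
      have := ((tendsto_const_nhds (x := t)).mul hs1).smul_const ξ
      simpa using this
    have h1 : f (t • ξ) ≤ liminf (fun n => f ((t * s n) • ξ)) atTop :=
      hlsc _ (hmem t ht) _ hu htend
    have h2 : ∀ n, f ((t * s n) • ξ) ≤ c + ε := by
      intro n
      have : f (t • (s n • ξ)) ≤ f (s n • ξ) + ENNReal.ofReal ε :=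
        hη' _ (hmem _ (hsp n).2) t ht hte
      rw [smul_smul] at this
      refine this.trans (add_le_add (hsp n).1.le ?_)
      simp [ENNReal.ofReal_coe_nnreal]
    exact h1.trans (liminf_le_of_frequently_le' (Eventually.frequently
      (Eventually.of_forall h2)))
  exact limsup_le_of_le (by isBoundedDefault) hev

end Aux

/-- The extension `f̂` is radially continuous in `cl D`. -/
theorem stmt_9 {E : Type*} [NormedAddCommGroup E] [NormedSpace ℝ E] [FiniteDimensional ℝ E]
    {D : Set E} (f : E → ℝ≥0∞) (hf : RUUSC f D)
    (hD : ∀ t ∈ Set.Ico (0 : ℝ) 1, t • closure D ⊆ D)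
    (hlsc : ∀ ξ ∈ D, ∀ u : ℕ → E, (∀ n, u n ∈ D) → Tendsto u atTop (𝓝 ξ) →
      f ξ ≤ liminf (fun n => f (u n)) atTop) :
    ∀ ξ ∈ closure D,
      Tendsto (fun t : ℝ => extRadial f D (t • ξ)) (𝓝[<] (1 : ℝ))
        (𝓝 (extRadial f D ξ)) := by
  intro ξ hξ
  have hmem : ∀ t ∈ Set.Ico (0 : ℝ) 1, t • ξ ∈ D := fun t ht =>
    hD t ht (Set.smul_mem_smul_set hξ)
  set L := limsup (fun t : ℝ => f (t • ξ)) (𝓝[<] (1 : ℝ)) with hL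
  have hkey := aux_key hf hD hlsc hξ
  have htend : Tendsto (fun t : ℝ => f (t • ξ)) (𝓝[<] (1 : ℝ)) (𝓝 L) :=
    tendsto_of_le_liminf_of_limsup_le hkey le_rfl
  have hev : ∀ᶠ t : ℝ in 𝓝[<] (1 : ℝ), f (t • ξ) = extRadial f D (t • ξ) := by
    filter_upwards [aux_Ico_mem] with t ht
    simp [extRadial, hmem t ht]
  by_cases hξD : ξ ∈ D
  · -- need L = f ξ
    have h1 : L ≤ f ξ := by
      refine ENNReal.le_of_forall_pos_le_add fun ε hε _ => ?_
      obtain ⟨η, hη, hη'⟩ := hf ε hε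
      refine limsup_le_of_le (by isBoundedDefault) ?_
      filter_upwards [aux_Ico_mem, aux_eta η hη] with t ht hte
      have := hη' ξ hξD t ht hte
      refine this.trans (add_le_add_right ?_ _)
      simp [ENNReal.ofReal_coe_nnreal]
    have h2 : f ξ ≤ L := by
      refine le_of_forall_gt_imp_ge_of_dense fun c hc => ?_
      have hc' : liminf (fun t : ℝ => f (t • ξ)) (𝓝[<] (1 : ℝ)) < c :=
        lt_of_le_of_lt (liminf_le_limsup) hc
      have hfreq : ∃ᶠ t : ℝ in 𝓝[<] (1 : ℝ), f (t • ξ) < c ∧ t ∈ Set.Ico (0 : ℝ) 1 :=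
        (frequently_lt_of_liminf_lt (by isBoundedDefault) hc').and_eventually aux_Ico_mem
      obtain ⟨s, hs, hsp⟩ := Filter.exists_seq_forall_of_frequently hfreq
      have hs1 : Tendsto (fun n => s n • ξ) atTop (𝓝 ξ) := by
        have := (hs.mono_right nhdsWithin_le_nhds).smul_const ξ
        simpa using this
      have := hlsc ξ hξD (fun n => s n • ξ) (fun n => hmem _ (hsp n).2) hs1
      exact this.trans (liminf_le_of_frequently_le' (Eventually.frequently
        (Eventually.of_forall fun n => (hsp n).1.le)))
    have hLf : L = f ξ := le_antisymm h1 h2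
    have : extRadial f D ξ = L := by rw [hLf]; simp [extRadial, hξD]
    rw [this]
    exact htend.congr' hev
  · have : extRadial f D ξ = L := by simp [extRadial, hξD, hξ, hL]
    rw [this]
    exact htend.congr' hev
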